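/- The function χ(γ) := arccos γ − 3√(1−γ²)/(γ+2) is nonnegative for all γ ∈ [0,1]. -/

import Mathlib

open Real

private lemma sin_sub_mul_cos_nonneg {x : ℝ} (hx : 0 ≤ x) (hx2 : x ≤ π/2) :
    0 ≤ Real.sin x - x * Real.cos x := by
  rcases eq_or_lt_of_le hx with h0 | h0
  · simp [← h0]
  rcases eq_or_lt_of_le hx2 with h2 | h2
  · simp [h2, Real.cos_pi_div_two]
  · have hcos : 0 < Real.cos x := Real.cos_pos_of_mem_Ioo ⟨by linarith [Real.pi_pos], h2⟩
    have ht := Real.lt_tan h0 h2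
    rw [Real.tan_eq_sin_div_cos, lt_div_iff₀ hcos] at ht
    linarith

private lemma aux_g {x : ℝ} (hx : 0 ≤ x) (hx2 : x ≤ π/2) :
    0 ≤ 2 - 2 * Real.cos x - x * Real.sin x := by
  set g : ℝ → ℝ := fun y => 2 - 2 * Real.cos y - y * Real.sin y with hg
  have hderiv : ∀ y : ℝ, HasDerivAt g (Real.sin y - y * Real.cos y) y := by
    intro y
    have h1 : HasDerivAt (fun y : ℝ => 2 - 2 * Real.cos y) (2 * Real.sin y) y := by
      simpa using ((Real.hasDerivAt_cos y).const_mul (2:ℝ)).const_sub 2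
    have h2 : HasDerivAt (fun y : ℝ => y * Real.sin y)
        (1 * Real.sin y + y * Real.cos y) y :=
      (hasDerivAt_id y).mul (Real.hasDerivAt_sin y)
    have := h1.sub h2
    refine this.congr_deriv ?_
    ring
  have hmono : MonotoneOn g (Set.Icc 0 (π/2)) := by
    apply monotoneOn_of_deriv_nonneg (convex_Icc _ _)
    · exact (Continuous.continuousOn (by continuity))
    · intro y hy
      exact (hderiv y).differentiableAt.differentiableWithinAt
    · intro y hy
      rw [interior_Icc] at hy
      rw [(hderiv y).deriv]
      exact sin_sub_mul_cos_nonneg hy.1.le hy.2.le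
  have := hmono ⟨le_refl 0, by positivity⟩ ⟨hx, hx2⟩ hx
  simpa [hg] using this

private lemma cusa {x : ℝ} (hx : 0 ≤ x) (hx2 : x ≤ π/2) :
    3 * Real.sin x ≤ x * (Real.cos x + 2) := by
  set f : ℝ → ℝ := fun y => y * (Real.cos y + 2) - 3 * Real.sin y with hf
  have hderiv : ∀ y : ℝ, HasDerivAt f (2 - 2 * Real.cos y - y * Real.sin y) y := by
    intro y
    have h1 : HasDerivAt (fun y : ℝ => y * (Real.cos y + 2))
        (1 * (Real.cos y + 2) + y * (-Real.sin y)) y :=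
      (hasDerivAt_id y).mul ((Real.hasDerivAt_cos y).add_const 2)
    have h2 : HasDerivAt (fun y : ℝ => 3 * Real.sin y) (3 * Real.cos y) y :=
      (Real.hasDerivAt_sin y).const_mul 3
    have := h1.sub h2
    refine this.congr_deriv ?_
    ring
  have hmono : MonotoneOn f (Set.Icc 0 (π/2)) := by
    apply monotoneOn_of_deriv_nonneg (convex_Icc _ _)
    · exact (Continuous.continuousOn (by continuity))
    · intro y hy
      exact (hderiv y).differentiableAt.differentiableWithinAt
    · intro y hy
      rw [interior_Icc] at hy
      rw [(hderiv y).deriv]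
      exact aux_g hy.1.le hy.2.le
  have := hmono ⟨le_refl 0, by positivity⟩ ⟨hx, hx2⟩ hx
  simp only [hf] at this
  simp at this
  linarith

theorem chi_nonneg :
    ∀ γ ∈ Set.Icc (0:ℝ) 1,
      Real.arccos γ - 3 * Real.sqrt (1 - γ^2) / (γ + 2) ≥ 0 := by
  rintro γ ⟨h0, h1⟩
  set θ := Real.arccos γ with hθ
  have hθ0 : 0 ≤ θ := Real.arccos_nonneg γ
  have hθ2 : θ ≤ π/2 := by
    exact Real.arccos_le_pi_div_two.2 h0
  have hcos : Real.cos θ = γ := Real.cos_arccos (by linarith) h1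
  have hsin : Real.sin θ = Real.sqrt (1 - γ^2) := by
    rw [hθ, Real.sin_arccos]
  have := cusa hθ0 hθ2
  rw [hcos, hsin] at this
  have hpos : (0:ℝ) < γ + 2 := by linarith
  rw [ge_iff_le, sub_nonneg, div_le_iff₀ hpos]
  linarith
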